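/- Let P₁,…,P₄ ∈ ℝ², let J be the Jacobian determinant of the associated bilinear map, and let c₁, c₂, c₄ be the corner cross products. The vertex mode ψ̂_{0,0}(x̂,ŷ) = ( (ŷ−1)²(1+ŷ)(x̂−1)·((c₁+2c₂)x̂ + 3c₁+2c₂)/128 , −(1+x̂)(ŷ−1)(x̂−1)²·((c₁+2c₄)ŷ + 3c₁+2c₄)/128 ) satisfies: (i) its second component vanishes whenever x̂ = ±1 and its first component vanishes whenever ŷ = ±1 (vanishing tangential trace on all four edges of [−1,1]²); (ii) ∇×ψ̂_{0,0}(−1,ŷ) = J(−1,ŷ)·(1−ŷ)/2 for all ŷ; (iii) ∇×ψ̂_{0,0}(x̂,−1) = J(x̂,−1)·(1−x̂)/2 for all x̂; (iv) ∇×ψ̂_{0,0}(1,ŷ) = 0 for all ŷ and ∇×ψ̂_{0,0}(x̂,1) = 0 for all x̂. -/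

import Mathlib

/-- Entry `B₁₁` of the Jacobian matrix of the bilinear map: `(x₂₁(1−ŷ) + x₃₄(1+ŷ))/4`. -/
noncomputable def B11 (x1 x2 x3 x4 yh : ℝ) : ℝ :=
  ((x2 - x1) * (1 - yh) + (x3 - x4) * (1 + yh)) / 4

/-- Entry `B₁₂`: `(x₄₁(1−x̂) + x₃₂(1+x̂))/4`. -/
noncomputable def B12 (x1 x2 x3 x4 xh : ℝ) : ℝ :=
  ((x4 - x1) * (1 - xh) + (x3 - x2) * (1 + xh)) / 4

/-- Entry `B₂₁`: `(y₂₁(1−ŷ) + y₃₄(1+ŷ))/4`. -/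
noncomputable def B21 (y1 y2 y3 y4 yh : ℝ) : ℝ :=
  ((y2 - y1) * (1 - yh) + (y3 - y4) * (1 + yh)) / 4

/-- Entry `B₂₂`: `(y₄₁(1−x̂) + y₃₂(1+x̂))/4`. -/
noncomputable def B22 (y1 y2 y3 y4 xh : ℝ) : ℝ :=
  ((y4 - y1) * (1 - xh) + (y3 - y2) * (1 + xh)) / 4

/-- The Jacobian determinant `J(x̂,ŷ) = det B(x̂,ŷ)` of the bilinear map. -/
noncomputable def Jdet (x1 x2 x3 x4 y1 y2 y3 y4 xh yh : ℝ) : ℝ :=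
  B11 x1 x2 x3 x4 yh * B22 y1 y2 y3 y4 xh - B12 x1 x2 x3 x4 xh * B21 y1 y2 y3 y4 yh

/-- Scalar curl of a planar vector field: `∇×u = ∂u₂/∂x̂ − ∂u₁/∂ŷ`. -/
noncomputable def scurl (u : ℝ × ℝ → ℝ × ℝ) (z : ℝ × ℝ) : ℝ :=
  deriv (fun t => (u (t, z.2)).2) z.1 - deriv (fun t => (u (z.1, t)).1) z.2

/-- Vertex mode `ψ̂_{0,0}` (corresponding to vertex `P₁`). -/
noncomputable def psi00 (x1 x2 x3 x4 y1 y2 y3 y4 : ℝ) (z : ℝ × ℝ) : ℝ × ℝ :=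
  let c1 := (x2 - x1) * (y4 - y1) - (y2 - y1) * (x4 - x1)
  let c2 := (x3 - x2) * (y1 - y2) - (y3 - y2) * (x1 - x2)
  let c4 := (x1 - x4) * (y3 - y4) - (y1 - y4) * (x3 - x4)
  ((z.2 - 1) ^ 2 * (1 + z.2) * (z.1 - 1) * ((c1 + 2 * c2) * z.1 + 3 * c1 + 2 * c2) / 128,
   -((1 + z.1) * (z.2 - 1) * (z.1 - 1) ^ 2 * ((c1 + 2 * c4) * z.2 + 3 * c1 + 2 * c4)) / 128)

/-- Vertex mode `ψ̂_{0,1}` (corresponding to vertex `P₂`). -/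
noncomputable def psi01 (x1 x2 x3 x4 y1 y2 y3 y4 : ℝ) (z : ℝ × ℝ) : ℝ × ℝ :=
  let c1 := (x2 - x1) * (y4 - y1) - (y2 - y1) * (x4 - x1)
  let c2 := (x3 - x2) * (y1 - y2) - (y3 - y2) * (x1 - x2)
  let c3 := (x4 - x3) * (y2 - y3) - (y4 - y3) * (x2 - x3)
  ((z.2 - 1) ^ 2 * (1 + z.2) * (z.1 + 1) * ((2 * c1 + c2) * z.1 - (2 * c1 + 3 * c2)) / 128,
   (1 - z.1) * (z.2 - 1) * (1 + z.1) ^ 2 * ((c2 + 2 * c3) * z.2 + 3 * c2 + 2 * c3) / 128)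

/-- Vertex mode `ψ̂_{1,1}` (corresponding to vertex `P₃`). -/
noncomputable def psi11 (x1 x2 x3 x4 y1 y2 y3 y4 : ℝ) (z : ℝ × ℝ) : ℝ × ℝ :=
  let c2 := (x3 - x2) * (y1 - y2) - (y3 - y2) * (x1 - x2)
  let c3 := (x4 - x3) * (y2 - y3) - (y4 - y3) * (x2 - x3)
  let c4 := (x1 - x4) * (y3 - y4) - (y1 - y4) * (x3 - x4)
  ((z.2 + 1) ^ 2 * (1 - z.2) * (z.1 + 1) * (-(2 * c4 + c3) * z.1 + 2 * c4 + 3 * c3) / 128,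
   (1 - z.1) * (z.2 + 1) * (z.1 + 1) ^ 2 * ((2 * c2 + c3) * z.2 - (2 * c2 + 3 * c3)) / 128)

/-- Vertex mode `ψ̂_{1,0}` (corresponding to vertex `P₄`). -/
noncomputable def psi10 (x1 x2 x3 x4 y1 y2 y3 y4 : ℝ) (z : ℝ × ℝ) : ℝ × ℝ :=
  let c1 := (x2 - x1) * (y4 - y1) - (y2 - y1) * (x4 - x1)
  let c3 := (x4 - x3) * (y2 - y3) - (y4 - y3) * (x2 - x3)
  let c4 := (x1 - x4) * (y3 - y4) - (y1 - y4) * (x3 - x4)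
  ((z.2 + 1) ^ 2 * (1 - z.2) * (z.1 - 1) * (-(c4 + 2 * c3) * z.1 - (3 * c4 + 2 * c3)) / 128,
   (1 + z.1) * (z.2 + 1) * (z.1 - 1) ^ 2 * (-(2 * c1 + c4) * z.2 + 2 * c1 + 3 * c4) / 128)

lemma deriv_aux (C t : ℝ) :
    deriv (fun s : ℝ => C * ((s - 1) ^ 2 * (1 + s))) t
      = C * (2 * (t - 1) * (1 + t) + (t - 1) ^ 2) := by
  have h : HasDerivAt (fun s : ℝ => (s - 1) ^ 2 * (1 + s))
      (2 * (t - 1) * (1 + t) + (t - 1) ^ 2) t := by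
    have h1 : HasDerivAt (fun s : ℝ => (s - 1) ^ 2) (2 * (t - 1)) t := by
      simpa using ((hasDerivAt_id t).sub_const 1).fun_pow 2
    have h2 : HasDerivAt (fun s : ℝ => 1 + s) 1 t := by
      simpa using (hasDerivAt_id t).const_add 1
    have : HasDerivAt (fun s : ℝ => (s - 1) ^ 2 * (1 + s))
        (2 * (t - 1) * (1 + t) + (t - 1) ^ 2 * 1) t := h1.fun_mul h2
    convert this using 1
    ring
  simpa using (h.const_mul C).deriv

/-- Trace properties of the vertex mode `ψ̂_{0,0}`:
(i) vanishing tangential trace on all four edges of `[−1,1]²`;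
(ii) `∇×ψ̂_{0,0}(−1,ŷ) = J(−1,ŷ)·(1−ŷ)/2`; (iii) `∇×ψ̂_{0,0}(x̂,−1) = J(x̂,−1)·(1−x̂)/2`;
(iv) `∇×ψ̂_{0,0}(1,ŷ) = 0` and `∇×ψ̂_{0,0}(x̂,1) = 0`. -/
theorem vertex_mode_P1_traces (x1 x2 x3 x4 y1 y2 y3 y4 : ℝ) :
    (∀ yh : ℝ, (psi00 x1 x2 x3 x4 y1 y2 y3 y4 (-1, yh)).2 = 0 ∧
      (psi00 x1 x2 x3 x4 y1 y2 y3 y4 (1, yh)).2 = 0) ∧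
    (∀ xh : ℝ, (psi00 x1 x2 x3 x4 y1 y2 y3 y4 (xh, -1)).1 = 0 ∧
      (psi00 x1 x2 x3 x4 y1 y2 y3 y4 (xh, 1)).1 = 0) ∧
    (∀ yh : ℝ, scurl (psi00 x1 x2 x3 x4 y1 y2 y3 y4) (-1, yh) =
      Jdet x1 x2 x3 x4 y1 y2 y3 y4 (-1) yh * (1 - yh) / 2) ∧
    (∀ xh : ℝ, scurl (psi00 x1 x2 x3 x4 y1 y2 y3 y4) (xh, -1) =
      Jdet x1 x2 x3 x4 y1 y2 y3 y4 xh (-1) * (1 - xh) / 2) ∧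
    (∀ yh : ℝ, scurl (psi00 x1 x2 x3 x4 y1 y2 y3 y4) (1, yh) = 0) ∧
    (∀ xh : ℝ, scurl (psi00 x1 x2 x3 x4 y1 y2 y3 y4) (xh, 1) = 0) := by
  set c1 := (x2 - x1) * (y4 - y1) - (y2 - y1) * (x4 - x1) with hc1
  set c2 := (x3 - x2) * (y1 - y2) - (y3 - y2) * (x1 - x2) with hc2
  set c4 := (x1 - x4) * (y3 - y4) - (y1 - y4) * (x3 - x4) with hc4
  have curl_eq : ∀ a b : ℝ, scurl (psi00 x1 x2 x3 x4 y1 y2 y3 y4) (a, b) =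
      (-((b - 1) * ((c1 + 2 * c4) * b + 3 * c1 + 2 * c4)) / 128) *
        (2 * (a - 1) * (1 + a) + (a - 1) ^ 2)
      - ((a - 1) * ((c1 + 2 * c2) * a + 3 * c1 + 2 * c2) / 128) *
        (2 * (b - 1) * (1 + b) + (b - 1) ^ 2) := by
    intro a b
    have e1 : (fun t => (psi00 x1 x2 x3 x4 y1 y2 y3 y4 (t, b)).2)
        = fun t => (-((b - 1) * ((c1 + 2 * c4) * b + 3 * c1 + 2 * c4)) / 128) *
            ((t - 1) ^ 2 * (1 + t)) := by
      funext t; simp only [psi00, ← hc1, ← hc2, ← hc4]; ring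
    have e2 : (fun t => (psi00 x1 x2 x3 x4 y1 y2 y3 y4 (a, t)).1)
        = fun t => ((a - 1) * ((c1 + 2 * c2) * a + 3 * c1 + 2 * c2) / 128) *
            ((t - 1) ^ 2 * (1 + t)) := by
      funext t; simp only [psi00, ← hc1, ← hc2, ← hc4]; ring
    unfold scurl
    rw [e1, e2, deriv_aux, deriv_aux]
  refine ⟨?_, ?_, ?_, ?_, ?_, ?_⟩
  · intro yh; constructor <;> · simp only [psi00]; ring
  · intro xh; constructor <;> · simp only [psi00]; ring
  · intro yh
    rw [curl_eq]
    simp only [Jdet, B11, B12, B21, B22, hc1, hc2, hc4]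
    ring
  · intro xh
    rw [curl_eq]
    simp only [Jdet, B11, B12, B21, B22, hc1, hc2, hc4]
    ring
  · intro yh; rw [curl_eq]; ring
  · intro xh; rw [curl_eq]; ring
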